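/- arXiv:math/0007133 — 9 statements merged into one kernel-verified Lean document; each statement's English description precedes it below -/
import Mathlib

section
/- If f belongs to S*(A,B,b), then for every z ∈ D \ {0} with |z| = r one has | z·f′(z)/f(z) − (1 − (B² + b·(A·B − B²))·r²)/(1 − B²·r²) | ≤ |b|·(A − B)·r/(1 − B²·r²), where the center is a complex number and the absolute value is the complex modulus. (Lemma 2.1; the paper's displayed center has a sign misprint, the correct center being (1 − [B² + b(AB − B²)]r²)/(1 − B²r²).) -/
open Complex Metric Set

theorem stmt0 (A B : ℝ) (hB : -1 ≤ B) (hBA : B < A) (hA : A ≤ 1)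
    (b : ℂ) (hb : b ≠ 0) (f : ℂ → ℂ)
    (hf : AnalyticOn ℂ f (ball 0 1))
    (hf0 : f 0 = 0) (hf'0 : deriv f 0 = 1)
    (hfne : ∀ z ∈ ball (0:ℂ) 1, z ≠ 0 → f z ≠ 0)
    (ω : ℂ → ℂ) (hω : AnalyticOn ℂ ω (ball 0 1))
    (hω0 : ω 0 = 0) (hωlt : ∀ z ∈ ball (0:ℂ) 1, ‖ω z‖ < 1)
    (hmem : ∀ z ∈ ball (0:ℂ) 1, z ≠ 0 →
      1 + (1/b) * (z * deriv f z / f z - 1) = (1 + (A:ℂ) * ω z) / (1 + (B:ℂ) * ω z))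
    (z : ℂ) (hz : z ∈ ball (0:ℂ) 1) (hz0 : z ≠ 0)
    (r : ℝ) (hr : ‖z‖ = r) :
    ‖z * deriv f z / f z -
        (1 - ((B:ℂ)^2 + b * ((A:ℂ) * B - (B:ℂ)^2)) * (r:ℂ)^2) / (1 - (B:ℂ)^2 * (r:ℂ)^2)‖
      ≤ ‖b‖ * (A - B) * r / (1 - B^2 * r^2) := by
  have hr0 : 0 ≤ r := hr ▸ norm_nonneg z
  have hr1 : r < 1 := by
    rw [← hr]; simpa [mem_ball, Complex.dist_eq] using hz
  have hB1 : |B| ≤ 1 := abs_le.2 ⟨hB, le_of_lt (lt_of_lt_of_le hBA hA)⟩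
  have hB2 : B ^ 2 ≤ 1 := by nlinarith [abs_nonneg B, _root_.sq_abs B]
  have hden : (0:ℝ) < 1 - B ^ 2 * r ^ 2 := by nlinarith
  -- Schwarz lemma
  have hmaps : Set.MapsTo ω (ball 0 1) (ball 0 1) := fun x hx => by
    simpa [mem_ball, Complex.dist_eq] using hωlt x hx
  have hw_le : ‖ω z‖ ≤ r := by
    rw [← hr]
    exact Complex.norm_le_norm_of_mapsTo_ball (hω.differentiableOn) (hmaps.mono_right ball_subset_closedBall) hω0
      (by simpa [mem_ball, Complex.dist_eq] using hz)
  set w : ℂ := ω z with hw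
  have hBw : (1 : ℂ) + (B:ℂ) * w ≠ 0 := by
    intro h
    have : ‖(B:ℂ) * w‖ < 1 := by
      rw [norm_mul, Complex.norm_real, Real.norm_eq_abs]
      calc |B| * ‖w‖ ≤ 1 * r := by
            apply mul_le_mul hB1 hw_le (norm_nonneg w) zero_le_one
        _ < 1 := by simpa using hr1
    have h2 : (B:ℂ) * w = -1 := by linear_combination h
    rw [h2] at this; simp at this
  have hdenC : (1 : ℂ) - (B:ℂ)^2 * (r:ℂ)^2 ≠ 0 := by
    intro h
    have : ((1 - B^2*r^2 : ℝ) : ℂ) = 0 := by push_cast; linear_combination h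
    exact hden.ne' (by exact_mod_cast this)
  -- express z f'/f
  have hX : z * deriv f z / f z = 1 + b * ((1 + (A:ℂ) * w) / (1 + (B:ℂ) * w) - 1) := by
    have := hmem z hz hz0
    have hfz := hfne z hz hz0
    have hb1 : b * (1 / b) = 1 := by field_simp
    rw [hw]
    linear_combination b * this - (z * deriv f z / f z - 1) * hb1
  -- algebraic identity
  have hkey : z * deriv f z / f z -
      (1 - ((B:ℂ)^2 + b * ((A:ℂ) * B - (B:ℂ)^2)) * (r:ℂ)^2) / (1 - (B:ℂ)^2 * (r:ℂ)^2)
      = b * ((A:ℂ) - B) * (w + (B:ℂ) * (r:ℂ)^2) / ((1 + (B:ℂ) * w) * (1 - (B:ℂ)^2 * (r:ℂ)^2)) := by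
    rw [hX]
    have hBw' : (1 : ℂ) + w * (B:ℂ) ≠ 0 := by rw [mul_comm]; exact hBw
    field_simp
    ring
  rw [hkey]
  rw [norm_div, norm_mul, norm_mul, norm_mul]
  have habsden : ‖1 - (B:ℂ)^2 * (r:ℂ)^2‖ = 1 - B^2 * r^2 := by
    have : ((1:ℂ) - (B:ℂ)^2 * (r:ℂ)^2) = ((1 - B^2*r^2 : ℝ) : ℂ) := by push_cast; ring
    rw [this, Complex.norm_real, Real.norm_eq_abs, abs_of_pos hden]
  rw [habsden]
  have hAB : ‖(A:ℂ) - B‖ = A - B := by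
    have : ((A:ℂ) - B) = ((A - B : ℝ) : ℂ) := by push_cast; ring
    rw [this, Complex.norm_real, Real.norm_eq_abs, abs_of_pos (by linarith)]
  rw [hAB]
  rw [div_le_div_iff₀ (mul_pos (norm_pos_iff.mpr hBw) hden) hden]
  have hnum : ‖w + (B:ℂ) * (r:ℂ)^2‖ ≤ r * ‖1 + (B:ℂ) * w‖ := by
    have h1 : ‖w + (B:ℂ) * (r:ℂ)^2‖ ^ 2 ≤ (r * ‖1 + (B:ℂ) * w‖) ^ 2 := by
      have e1 : ‖w + (B:ℂ) * (r:ℂ)^2‖ ^ 2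
          = ‖w‖ ^ 2 + 2 * B * r^2 * w.re + B^2 * r^4 := by
        rw [Complex.sq_norm, Complex.sq_norm, Complex.normSq_apply, Complex.normSq_apply]
        simp only [Complex.add_re, Complex.add_im, Complex.mul_re, Complex.mul_im,
          ← Complex.ofReal_pow, Complex.ofReal_re, Complex.ofReal_im, Complex.one_re,
          Complex.one_im]
        ring
      have e2 : (r * ‖1 + (B:ℂ) * w‖) ^ 2
          = r^2 * (1 + 2 * B * w.re + B^2 * ‖w‖ ^ 2) := by
        rw [mul_pow, Complex.sq_norm, Complex.sq_norm, Complex.normSq_apply, Complex.normSq_apply]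
        simp only [Complex.add_re, Complex.add_im, Complex.mul_re, Complex.mul_im,
          ← Complex.ofReal_pow, Complex.ofReal_re, Complex.ofReal_im, Complex.one_re,
          Complex.one_im]
        ring
      rw [e1, e2]
      have hws : ‖w‖ ^ 2 ≤ r ^ 2 := by
        nlinarith [norm_nonneg w]
      nlinarith
    nlinarith [norm_nonneg (w + (B:ℂ) * (r:ℂ)^2),
      mul_nonneg hr0 (norm_nonneg (1 + (B:ℂ) * w))]
  have hbAB : (0:ℝ) ≤ ‖b‖ * (A - B) := by
    apply mul_nonneg (norm_nonneg b); linarith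
  nlinarith [mul_le_mul_of_nonneg_left hnum hbAB, hden.le,
    mul_le_mul_of_nonneg_right (mul_le_mul_of_nonneg_left hnum hbAB) hden.le]
end

section
/- If f belongs to S*(A,B,b), then for every z ∈ D \ {0} with |z| = r one has Re( z·f′(z)/f(z) ) ≥ ( 1 − |b|·(A − B)·r − (B² + (A·B − B²)·Re b)·r² ) / (1 − B²·r²). (Inequality (2.3) in the proof of Theorem 2.1.) -/
open Complex Metric Set


private lemma mono_aux (B ρ r ab bre : ℝ) (hρ0 : 0 ≤ ρ) (hρr : ρ ≤ r) (hr1 : r < 1)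
    (hBabs : |B| ≤ 1) (hab : 0 ≤ ab) (hbre : -ab ≤ bre) (hbre' : bre ≤ ab)
    (hD1 : 0 < 1 - B ^ 2 * ρ ^ 2) (hD2 : 0 < 1 - B ^ 2 * r ^ 2) :
    -(ab * r + B * bre * r ^ 2) / (1 - B ^ 2 * r ^ 2)
      ≤ -(ab * ρ + B * bre * ρ ^ 2) / (1 - B ^ 2 * ρ ^ 2) := by
  rw [neg_div, neg_div, neg_le_neg_iff, div_le_div_iff₀ hD1 hD2]
  have habsB2 : -(|B| * ab) ≤ B * bre := by
    have h4 : |B * bre| ≤ |B| * ab := by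
      rw [abs_mul]
      exact mul_le_mul_of_nonneg_left (abs_le.2 ⟨hbre, hbre'⟩) (abs_nonneg B)
    linarith [neg_abs_le (B * bre)]
  have hB2 : |B| ^ 2 = B ^ 2 := _root_.sq_abs B
  have hkey : 0 ≤ (ab * (r - ρ)) * (1 - |B| * (ρ + r) + B ^ 2 * (r * ρ)) := by
    have e : 1 - |B| * (ρ + r) + B ^ 2 * (r * ρ) = (1 - |B| * ρ) * (1 - |B| * r) := by
      rw [← hB2]; ring
    rw [e]
    apply mul_nonneg (mul_nonneg hab (by linarith))
    apply mul_nonneg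
    · nlinarith [abs_nonneg B]
    · nlinarith [abs_nonneg B]
  have h3 : 0 ≤ (r - ρ) * (ρ + r) * (B * bre + |B| * ab) := by
    apply mul_nonneg (mul_nonneg (by linarith) (by linarith))
    linarith
  nlinarith [hkey, h3]

theorem stmt1 (A B : ℝ) (hB : -1 ≤ B) (hBA : B < A) (hA : A ≤ 1)
    (b : ℂ) (hb : b ≠ 0) (f : ℂ → ℂ)
    (hf : AnalyticOn ℂ f (ball 0 1))
    (hf0 : f 0 = 0) (hf'0 : deriv f 0 = 1)
    (hfne : ∀ z ∈ ball (0:ℂ) 1, z ≠ 0 → f z ≠ 0)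
    (ω : ℂ → ℂ) (hω : AnalyticOn ℂ ω (ball 0 1))
    (hω0 : ω 0 = 0) (hωlt : ∀ z ∈ ball (0:ℂ) 1, ‖ω z‖ < 1)
    (hmem : ∀ z ∈ ball (0:ℂ) 1, z ≠ 0 →
      1 + (1/b) * (z * deriv f z / f z - 1) = (1 + (A:ℂ) * ω z) / (1 + (B:ℂ) * ω z))
    (z : ℂ) (hz : z ∈ ball (0:ℂ) 1) (hz0 : z ≠ 0)
    (r : ℝ) (hr : ‖z‖ = r) :
    (1 - ‖b‖ * (A - B) * r - (B^2 + (A * B - B^2) * b.re) * r^2) / (1 - B^2 * r^2)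
      ≤ (z * deriv f z / f z).re := by
  have hz1 : ‖z‖ < 1 := by simpa [Complex.dist_eq] using hz
  have hr1 : r < 1 := hr ▸ hz1
  have hr0 : 0 ≤ r := hr ▸ norm_nonneg z
  set w := ω z with hwdef
  set ρ := ‖w‖ with hρdef
  have hρ0 : 0 ≤ ρ := norm_nonneg w
  have hw1 : ρ < 1 := hωlt z hz
  have hρr : ρ ≤ r := by
    rw [← hr]
    exact Complex.norm_le_norm_of_mapsTo_ball hω.differentiableOn
      (fun x hx => ball_subset_closedBall (mem_ball_zero_iff.2 (hωlt x hx))) hω0 hz1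
  have hB1 : B ^ 2 ≤ 1 := by nlinarith
  have hBabs : |B| ≤ 1 := abs_le.2 ⟨hB, by linarith⟩
  have hD1 : 0 < 1 - B ^ 2 * ρ ^ 2 := by nlinarith
  have hD2 : 0 < 1 - B ^ 2 * r ^ 2 := by nlinarith
  have hden : (1 : ℂ) + B * w ≠ 0 := by
    intro h
    have h1 : ‖(B : ℂ) * w‖ = 1 := by
      rw [show (B : ℂ) * w = -1 by linear_combination h]; simp
    rw [norm_mul, Complex.norm_real, Real.norm_eq_abs] at h1
    nlinarith [abs_nonneg B]
  have key := hmem z hz hz0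
  have h1 : (1/b) * (z * deriv f z / f z - 1) = ((A:ℂ) - B) * w / (1 + B * w) := by
    have h2 : (1 + (A:ℂ) * w) / (1 + B * w) - 1 = ((A:ℂ) - B) * w / (1 + B * w) := by
      rw [div_sub_one hden]
      ring
    linear_combination key + h2
  have hX : z * deriv f z / f z = 1 + ((A : ℂ) - B) * (b * w / (1 + B * w)) := by
    field_simp at h1 ⊢
    linear_combination h1
  have hre : (z * deriv f z / f z).re = 1 + (A - B) * (b * w / (1 + B * w)).re := by
    rw [hX, show ((A : ℂ) - B) = ((A - B : ℝ) : ℂ) by push_cast; ring,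
      Complex.add_re, Complex.one_re, Complex.re_ofReal_mul]
  set m := (b * w / (1 + B * w)).re with hmdef
  set c : ℝ := -B * ρ ^ 2 / (1 - B ^ 2 * ρ ^ 2) with hcdef
  have hD1c : ((1 - B ^ 2 * ρ ^ 2 : ℝ) : ℂ) ≠ 0 := by exact_mod_cast hD1.ne'
  have hww : w * (starRingEnd ℂ) w = ((ρ ^ 2 : ℝ) : ℂ) := by
    rw [Complex.mul_conj]
    norm_cast
    rw [← Complex.sq_norm]
  have hcD : (c : ℂ) * ((1 - B ^ 2 * ρ ^ 2 : ℝ) : ℂ) = -(B:ℂ) * (ρ:ℂ) ^ 2 := by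
    have hD1c' : (1:ℂ) - (B:ℂ)^2*(ρ:ℂ)^2 ≠ 0 := by
      intro h; apply hD1c; push_cast; linear_combination h
    rw [hcdef]
    push_cast
    field_simp [hD1c']
  have hcan : w / (1 + (B:ℂ) * w) * (1 + (B:ℂ) * w) = w := div_mul_cancel₀ w hden
  have hζ : w / (1 + B * w) - (c : ℂ)
      = w * (1 + B * (starRingEnd ℂ) w) / ((1 + B * w) * ((1 - B ^ 2 * ρ ^ 2 : ℝ) : ℂ)) := by
    rw [eq_div_iff (mul_ne_zero hden hD1c)]
    linear_combination (norm := (push_cast; ring_nf))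
      (((1 - B ^ 2 * ρ ^ 2 : ℝ) : ℂ)) * hcan - (1 + (B:ℂ) * w) * hcD - (B:ℂ) * hww
  have habs_e : ‖w / (1 + B * w) - (c : ℂ)‖ = ρ / (1 - B ^ 2 * ρ ^ 2) := by
    have hconj : (1 : ℂ) + B * (starRingEnd ℂ) w = (starRingEnd ℂ) (1 + B * w) := by
      simp [map_add, map_mul, Complex.conj_ofReal]
    rw [hζ, norm_div, norm_mul, norm_mul, hconj, Complex.norm_conj, Complex.norm_real, Real.norm_eq_abs,
      abs_of_pos hD1, ← hρdef]
    have ha : ‖1 + (B:ℂ) * w‖ ≠ 0 := norm_ne_zero_iff.mpr hden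
    field_simp
  have hm1 : -(‖b‖ * ρ + B * b.re * ρ ^ 2) / (1 - B ^ 2 * ρ ^ 2) ≤ m := by
    have hsplit : b * w / (1 + B * w) = b * (c : ℂ) + b * (w / (1 + B * w) - (c : ℂ)) := by
      ring
    have hre2 : m = b.re * c + (b * (w / (1 + B * w) - (c : ℂ))).re := by
      rw [hmdef, hsplit, Complex.add_re]
      congr 1
      simp [Complex.mul_re]
    have hlow : -(‖b‖ * (ρ / (1 - B ^ 2 * ρ ^ 2)))
        ≤ (b * (w / (1 + B * w) - (c : ℂ))).re := by
      have h1 := abs_le.1 (Complex.abs_re_le_norm (b * (w / (1 + B * w) - (c : ℂ))))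
      have h2 : ‖b * (w / (1 + B * w) - (c : ℂ))‖
          = ‖b‖ * (ρ / (1 - B ^ 2 * ρ ^ 2)) := by
        rw [norm_mul, habs_e]
      linarith [h1.1, h2 ▸ h1.1]
    rw [hre2, hcdef]
    have heq : -(‖b‖ * ρ + B * b.re * ρ ^ 2) / (1 - B ^ 2 * ρ ^ 2)
        = b.re * (-B * ρ ^ 2 / (1 - B ^ 2 * ρ ^ 2))
          + -(‖b‖ * (ρ / (1 - B ^ 2 * ρ ^ 2))) := by
      field_simp
      ring
    rw [heq]
    have h2 : ‖b * (w / (1 + B * w) - (c : ℂ))‖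
        = ‖b‖ * (ρ / (1 - B ^ 2 * ρ ^ 2)) := by rw [norm_mul, habs_e]
    linarith
  -- monotonicity in ρ
  have hm2 : -(‖b‖ * r + B * b.re * r ^ 2) / (1 - B ^ 2 * r ^ 2)
      ≤ -(‖b‖ * ρ + B * b.re * ρ ^ 2) / (1 - B ^ 2 * ρ ^ 2) := by
    have hb1 := abs_le.1 (Complex.abs_re_le_norm b)
    exact mono_aux B ρ r (‖b‖) b.re hρ0 hρr hr1 hBabs (norm_nonneg b)
      hb1.1 hb1.2 hD1 hD2
  have hm : -(‖b‖ * r + B * b.re * r ^ 2) / (1 - B ^ 2 * r ^ 2) ≤ m :=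
    le_trans hm2 hm1
  have hm' : -(‖b‖ * r + B * b.re * r ^ 2) ≤ m * (1 - B ^ 2 * r ^ 2) := by
    rw [div_le_iff₀ hD2] at hm
    linarith
  rw [hre, div_le_iff₀ hD2]
  nlinarith [mul_le_mul_of_nonneg_left hm' (by linarith : (0:ℝ) ≤ A - B)]
end

section
/- Set r_s = 2 / ( |b|·(A − B) + √( |b|²·(A − B)² + 4·(B² + (A·B − B²)·Re b) ) ), assuming |b|²·(A − B)² + 4·(B² + (A·B − B²)·Re b) ≥ 0. If f belongs to S*(A,B,b), then Re( z·f′(z)/f(z) ) > 0 for every z ∈ D \ {0} with |z| < r_s. (Theorem 2.1: radius of starlikeness of the class S*(A,B,b).) -/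
open Complex Metric Set

set_option maxHeartbeats 1000000 in
theorem stmt2 (A B : ℝ) (hB : -1 ≤ B) (hBA : B < A) (hA : A ≤ 1)
    (b : ℂ) (hb : b ≠ 0) (f : ℂ → ℂ)
    (hf : AnalyticOn ℂ f (ball 0 1))
    (hf0 : f 0 = 0) (hf'0 : deriv f 0 = 1)
    (hfne : ∀ z ∈ ball (0:ℂ) 1, z ≠ 0 → f z ≠ 0)
    (ω : ℂ → ℂ) (hω : AnalyticOn ℂ ω (ball 0 1))
    (hω0 : ω 0 = 0) (hωlt : ∀ z ∈ ball (0:ℂ) 1, ‖ω z‖ < 1)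
    (hmem : ∀ z ∈ ball (0:ℂ) 1, z ≠ 0 →
      1 + (1/b) * (z * deriv f z / f z - 1) = (1 + (A:ℂ) * ω z) / (1 + (B:ℂ) * ω z))
    (hdisc : 0 ≤ ‖b‖^2 * (A - B)^2 + 4 * (B^2 + (A * B - B^2) * b.re))
    (z : ℂ) (hz : z ∈ ball (0:ℂ) 1) (hz0 : z ≠ 0)
    (hzr : ‖z‖ <
      2 / (‖b‖ * (A - B) +
        Real.sqrt (‖b‖^2 * (A - B)^2 + 4 * (B^2 + (A * B - B^2) * b.re)))) :
    0 < (z * deriv f z / f z).re := by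
  set w : ℂ := ω z with hw
  set r : ℝ := ‖z‖ with hr
  have hr0 : 0 ≤ r := norm_nonneg z
  have hr1 : r < 1 := by simpa [hr, mem_ball, Complex.dist_eq] using hz
  have hBle : |B| ≤ 1 := abs_le.2 ⟨hB, le_trans (le_of_lt hBA) hA⟩
  -- Schwarz lemma: |w| ≤ r
  have hwr : ‖w‖ ≤ r := by
    have hmaps : MapsTo ω (ball (0:ℂ) 1) (ball (0:ℂ) 1) := by
      intro x hx
      simpa [mem_ball, Complex.dist_eq] using hωlt x hx
    have := Complex.dist_le_dist_of_mapsTo_ball_self hω.differentiableOn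
      (fun x hx => by rw [hω0]; exact ball_subset_closedBall (hmaps hx)) hz
    simpa [hr, Complex.dist_eq, hω0] using this
  have hw1 : ‖w‖ < 1 := lt_of_le_of_lt hwr hr1
  -- 1 + B w ≠ 0
  have h1Bw : (1 : ℂ) + (B:ℂ) * w ≠ 0 := by
    intro h
    have h2 : ‖(B:ℂ) * w‖ < 1 := by
      rw [norm_mul, Complex.norm_real, Real.norm_eq_abs]
      calc |B| * ‖w‖ ≤ 1 * ‖w‖ :=
            mul_le_mul_of_nonneg_right hBle (norm_nonneg w)
        _ = ‖w‖ := one_mul _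
        _ < 1 := hw1
    have : (B:ℂ) * w = -1 := by linear_combination h
    rw [this] at h2
    simp at h2
  -- express z f'/f
  have hX : z * deriv f z / f z = 1 + ((A:ℂ) - B) * b * w / (1 + (B:ℂ) * w) := by
    have h := hmem z hz hz0
    have h1Bw' : 1 + w * (B:ℂ) ≠ 0 := by rwa [mul_comm]
    have e : z * deriv f z / f z = 1 + b * ((1 + (A:ℂ) * w) / (1 + (B:ℂ) * w) - 1) := by
      rw [hw, ← h, add_sub_cancel_left, ← mul_assoc, mul_one_div_cancel hb, one_mul, add_sub_cancel]
    rw [e]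
    field_simp
    ring
  rw [hX]
  clear_value r
  -- abbreviations
  set p : ℝ := ‖b‖ * (A - B) with hp
  set q : ℝ := B^2 + (A * B - B^2) * b.re with hq
  have hbpos : 0 < ‖b‖ := by simpa using hb
  have hppos : 0 < p := mul_pos hbpos (by linarith)
  have hspos : 0 < p + Real.sqrt (p^2 + 4*q) := by
    have := Real.sqrt_nonneg (p^2 + 4*q)
    linarith
  have hdisc' : 0 ≤ p^2 + 4*q := by
    have : p^2 = (‖b‖)^2 * (A-B)^2 := by rw [hp]; ring
    rw [this]; linarith [hdisc]
  -- key scalar inequality: q r² + p r < 1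
  have hkey : q * r^2 + p * r < 1 := by
    have hs := Real.sq_sqrt hdisc'
    set s : ℝ := Real.sqrt (p^2 + 4*q) with hsdef
    have hs0 : 0 ≤ s := Real.sqrt_nonneg _
    have hzr' : r * (p + s) < 2 := by
      rw [← lt_div_iff₀ hspos]
      have e : (‖b‖)^2 * (A - B)^2 = p^2 := by rw [hp]; ring
      calc r < 2 / (p + Real.sqrt ((‖b‖)^2 * (A - B)^2 + 4 * q)) := hzr
        _ = 2 / (p + s) := by rw [e]
    nlinarith [mul_nonneg hr0 hs0, mul_nonneg hr0 hppos.le, sq_nonneg (r*s),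
      mul_pos hppos hppos]
  have hB2 : B^2 ≤ 1 := by nlinarith [hB, hBA, hA]
  have hD : 0 < 1 - B^2 * r^2 := by nlinarith [hB2, hr0, hr1]
  -- the Möbius image point u
  set u : ℂ := w / (1 + (B:ℂ) * w) with hu
  have hure : (1 + ((A:ℂ) - B) * b * w / (1 + (B:ℂ) * w)).re
      = 1 + (A - B) * (b * u).re := by
    have : ((A:ℂ) - B) * b * w / (1 + (B:ℂ) * w) = (((A:ℝ) - B) : ℂ) * (b * u) := by
      rw [hu]; push_cast; ring
    rw [this]
    simp [Complex.add_re, Complex.re_ofReal_mul]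
  rw [hure]
  -- disc bound: |u + B r²/(1-B²r²)| ≤ r/(1-B²r²)
  have hcirc : ‖(1 - B^2*r^2 : ℝ) * u + ((B * r^2 : ℝ) : ℂ)‖ ≤ r := by
    have he : ((1 - B^2*r^2 : ℝ) : ℂ) * u + ((B * r^2 : ℝ) : ℂ)
        = (w + ((B * r^2 : ℝ) : ℂ)) / (1 + (B:ℂ) * w) := by
      rw [hu]
      push_cast
      field_simp
      ring
    rw [he, norm_div]
    rw [div_le_iff₀ (norm_pos_iff.mpr h1Bw)]
    -- squared inequality
    have hsq : (‖w + ((B * r^2 : ℝ) : ℂ)‖)^2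
        ≤ (r * ‖1 + (B:ℂ) * w‖)^2 := by
      have hre1 : (w + ((B * r^2 : ℝ) : ℂ)).re = w.re + B*r^2 := by
        rw [Complex.add_re, Complex.ofReal_re]
      have him1 : (w + ((B * r^2 : ℝ) : ℂ)).im = w.im := by
        rw [Complex.add_im, Complex.ofReal_im, add_zero]
      have hre2 : (1 + (B:ℂ) * w).re = 1 + B*w.re := by
        rw [Complex.add_re, Complex.one_re, Complex.re_ofReal_mul]
      have him2 : (1 + (B:ℂ) * w).im = B*w.im := by
        rw [Complex.add_im, Complex.one_im, Complex.im_ofReal_mul, zero_add]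
      have h1 : (‖w + ((B * r^2 : ℝ) : ℂ)‖)^2
          = (w.re + B*r^2)^2 + w.im^2 := by
        rw [Complex.sq_norm, Complex.normSq_apply, hre1, him1]; ring
      have h2 : (r * ‖1 + (B:ℂ) * w‖)^2
          = r^2 * ((1 + B*w.re)^2 + (B*w.im)^2) := by
        rw [mul_pow, Complex.sq_norm, Complex.normSq_apply, hre2, him2]; ring
      have h3 : w.re^2 + w.im^2 ≤ r^2 := by
        have := hwr
        have h4 : (‖w‖)^2 ≤ r^2 := by
          apply pow_le_pow_left₀ (norm_nonneg w) this
        rwa [Complex.sq_norm, Complex.normSq_apply, ← pow_two, ← pow_two] at h4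
      rw [h1, h2]
      nlinarith [mul_nonneg hD.le (sub_nonneg.mpr h3)]
    have h5 : 0 ≤ r * ‖1 + (B:ℂ) * w‖ := by positivity
    exact (pow_le_pow_iff_left₀ (norm_nonneg _) h5 (by norm_num)).1 hsq
  -- deduce lower bound on Re(b u)
  have hre : (b * ((1 - B^2*r^2 : ℝ) * u + ((B * r^2 : ℝ) : ℂ))).re
      ≥ -(‖b‖ * r) := by
    have h6 : |(b * ((1 - B^2*r^2 : ℝ) * u + ((B * r^2 : ℝ) : ℂ))).re|
        ≤ ‖b‖ * r := by
      calc |(b * _).re| ≤ ‖b * ((1 - B^2*r^2 : ℝ) * u + ((B * r^2 : ℝ) : ℂ))‖ :=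
            Complex.abs_re_le_norm _
        _ = ‖b‖ * ‖(1 - B^2*r^2 : ℝ) * u + ((B * r^2 : ℝ) : ℂ)‖ :=
            norm_mul _ _
        _ ≤ ‖b‖ * r := mul_le_mul_of_nonneg_left hcirc hbpos.le
    linarith [neg_abs_le ((b * ((1 - B^2*r^2 : ℝ) * u + ((B * r^2 : ℝ) : ℂ))).re)]
  have hexp : (b * ((1 - B^2*r^2 : ℝ) * u + ((B * r^2 : ℝ) : ℂ))).re
      = (1 - B^2*r^2) * (b*u).re + B*r^2 * b.re := by
    rw [mul_add, Complex.add_re]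
    congr 1
    · rw [show b * (((1 - B^2*r^2 : ℝ) : ℂ) * u) = ((1 - B^2*r^2 : ℝ) : ℂ) * (b*u) by ring,
        Complex.re_ofReal_mul]
    · rw [show b * ((B * r^2 : ℝ) : ℂ) = ((B * r^2 : ℝ) : ℂ) * b by ring,
        Complex.re_ofReal_mul]
  have hbu : (1 - B^2*r^2) * (b*u).re ≥ -(‖b‖ * r) - B*r^2 * b.re := by
    rw [hexp] at hre; linarith
  -- conclude
  have hAB : 0 < A - B := by linarith
  -- (1-B²r²)(1 + (A-B) Re(bu)) ≥ 1 - B²r² - (A-B)(|b| r + B r² Re b) = 1 - q r² - p r > 0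
  have hfin : 0 < (1 - B^2*r^2) * (1 + (A - B) * (b*u).re) := by
    have h7 : (1 - B^2*r^2) * (1 + (A - B) * (b*u).re)
        = (1 - B^2*r^2) + (A - B) * ((1 - B^2*r^2) * (b*u).re) := by ring
    rw [h7]
    have h8 : (A - B) * ((1 - B^2*r^2) * (b*u).re)
        ≥ (A - B) * (-(‖b‖ * r) - B*r^2 * b.re) :=
      mul_le_mul_of_nonneg_left hbu hAB.le
    have h9 : (A - B) * (-(‖b‖ * r) - B*r^2 * b.re)
        = -(p * r) - (A - B) * B * r^2 * b.re := by rw [hp]; ring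
    have h10 : q * r^2 = B^2 * r^2 + (A - B) * B * r^2 * b.re := by rw [hq]; ring
    nlinarith [hkey]
  nlinarith [hfin, hD]
end

section
/- Suppose B = 0 (so 0 < A ≤ 1). If f belongs to S*(A,0,b), then for every z ∈ D with |z| = r one has r·e^{−|b|·A·r} ≤ |f(z)| ≤ r·e^{|b|·A·r}. (Theorem 3.1, case B = 0.) -/
open Complex Metric Set

theorem stmt5 (A : ℝ) (hA0 : 0 < A) (hA : A ≤ 1)
    (b : ℂ) (hb : b ≠ 0) (f : ℂ → ℂ)
    (hf : AnalyticOn ℂ f (ball 0 1))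
    (hf0 : f 0 = 0) (hf'0 : deriv f 0 = 1)
    (hfne : ∀ z ∈ ball (0:ℂ) 1, z ≠ 0 → f z ≠ 0)
    (ω : ℂ → ℂ) (hω : AnalyticOn ℂ ω (ball 0 1))
    (hω0 : ω 0 = 0) (hωlt : ∀ z ∈ ball (0:ℂ) 1, ‖ω z‖ < 1)
    (hmem : ∀ z ∈ ball (0:ℂ) 1, z ≠ 0 →
      1 + (1/b) * (z * deriv f z / f z - 1) = 1 + (A:ℂ) * ω z)
    (z : ℂ) (hz : z ∈ ball (0:ℂ) 1) (r : ℝ) (hr : ‖z‖ = r) :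
    r * Real.exp (-(‖b‖ * A * r)) ≤ ‖f z‖ ∧
      ‖f z‖ ≤ r * Real.exp (‖b‖ * A * r) := by
  subst hr
  -- trivial case z = 0
  rcases eq_or_ne z 0 with rfl | hz0
  · simp [hf0]
  set r := ‖z‖ with hr
  have hr0 : 0 < r := by simpa [hr] using hz0
  have hr1 : r < 1 := by simpa [mem_ball, Complex.dist_eq] using hz
  -- ψ := dslope ω 0, bounded by 1 on the ball
  set ψ : ℂ → ℂ := dslope ω 0 with hψ
  have hωd : DifferentiableOn ℂ ω (ball 0 1) := hω.differentiableOn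
  have hωmaps : MapsTo ω (ball (0:ℂ) 1) (ball (ω 0) 1) := by
    intro w hw
    rw [hω0]
    simpa [mem_ball, Complex.dist_eq] using hωlt w hw
  have hψle : ∀ w ∈ ball (0:ℂ) 1, ‖ψ w‖ ≤ 1 := by
    intro w hw
    have := Complex.norm_dslope_le_div_of_mapsTo_ball hωd (hωmaps.mono_right ball_subset_closedBall) hw
    simpa using this
  have hψd : DifferentiableOn ℂ ψ (ball 0 1) :=
    (differentiableOn_dslope (ball_mem_nhds 0 one_pos)).mpr hωd
  have hψval : ∀ w : ℂ, w ≠ 0 → ψ w = ω w / w := by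
    intro w hw
    rw [hψ, dslope_of_ne _ hw, slope_def_field]
    simp [hω0, div_eq_iff hw]
  -- g := dslope f 0
  set g : ℂ → ℂ := dslope f 0 with hg
  have hfd : DifferentiableOn ℂ f (ball 0 1) := hf.differentiableOn
  have hgd : DifferentiableOn ℂ g (ball 0 1) :=
    (differentiableOn_dslope (ball_mem_nhds 0 one_pos)).mpr hfd
  have hg0 : g 0 = 1 := by rw [hg, dslope_same, hf'0]
  have hgval : ∀ w : ℂ, w ≠ 0 → g w = f w / w := by
    intro w hw
    rw [hg, dslope_of_ne _ hw, slope_def_field]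
    simp [hf0, div_eq_iff hw]
  -- derivative identity for g away from 0
  have hgderiv : ∀ w ∈ ball (0:ℂ) 1, w ≠ 0 →
      HasDerivAt g (b * A * ψ w * g w) w := by
    intro w hw hw0
    have hfw : f w ≠ 0 := hfne w hw hw0
    have hkey : w * deriv f w - f w = b * A * ω w * f w := by
      have h1 := hmem w hw hw0
      have h2 : (1/b) * (w * deriv f w / f w - 1) = A * ω w := by
        field_simp at h1 ⊢
        linear_combination h1
      field_simp at h2
      linear_combination h2
    have hfd' : HasDerivAt f (deriv f w) w :=
      ((hfd.differentiableAt (isOpen_ball.mem_nhds hw)).hasDerivAt)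
    have hD : HasDerivAt (fun u => f u / u)
        ((deriv f w * w - f w * 1) / w ^ 2) w := hfd'.div (hasDerivAt_id w) hw0
    have heq : g =ᶠ[nhds w] fun u => f u / u := by
      filter_upwards [isOpen_ne.mem_nhds hw0] with u hu
      exact hgval u hu
    have hDg : HasDerivAt g ((deriv f w * w - f w * 1) / w ^ 2) w :=
      hD.congr_of_eventuallyEq heq
    convert hDg using 1
    rw [hψval w hw0, hgval w hw0]
    field_simp
    linear_combination (-1 : ℂ) * hkey
  -- the function E and F
  set u : ℝ → ℂ := fun s => ψ ((s : ℂ) * z) with hu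
  have hsz : ∀ s : ℝ, |s| ≤ 1 → (s : ℂ) * z ∈ ball (0:ℂ) 1 := by
    intro s hs
    simp only [mem_ball, Complex.dist_eq, sub_zero, norm_mul, Complex.norm_real, Real.norm_eq_abs]
    calc |s| * r ≤ 1 * r := by nlinarith [abs_nonneg s]
    _ < 1 := by linarith
  have hucontAt : ∀ s ∈ Ioo (-(r⁻¹)) r⁻¹, ContinuousAt u s := by
    intro s hs
    have hmem' : (s : ℂ) * z ∈ ball (0:ℂ) 1 := by
      simp only [mem_ball, Complex.dist_eq, sub_zero, norm_mul, Complex.norm_real, Real.norm_eq_abs]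
      rcases hs with ⟨h1, h2⟩
      have : |s| < r⁻¹ := abs_lt.mpr ⟨h1, h2⟩
      calc |s| * r < r⁻¹ * r := by nlinarith
      _ = 1 := inv_mul_cancel₀ hr0.ne'
    exact ContinuousAt.comp (hψd.differentiableAt (isOpen_ball.mem_nhds hmem')).continuousAt
      ((Complex.continuous_ofReal.mul continuous_const).continuousAt)
  have hucont : ContinuousOn u (Ioo (-(r⁻¹)) r⁻¹) :=
    fun s hs => (hucontAt s hs).continuousWithinAt
  have hIoo : Icc (0:ℝ) 1 ⊆ Ioo (-(r⁻¹)) r⁻¹ := by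
    intro s hs
    have h1 : (1:ℝ) < r⁻¹ := (one_lt_inv₀ hr0).mpr hr1
    constructor <;> [linarith [hs.1]; linarith [hs.2]]
  set E : ℝ → ℂ := fun t => b * A * z * ∫ s in (0:ℝ)..t, u s with hE
  have hEderiv : ∀ t ∈ Icc (0:ℝ) 1, HasDerivAt E (b * A * z * u t) t := by
    intro t ht
    have hint : IntervalIntegrable u MeasureTheory.volume 0 t := by
      apply ContinuousOn.intervalIntegrable
      apply hucont.mono
      intro s hs
      apply hIoo
      rcases ht with ⟨ht0, ht1⟩
      rcases hs with ⟨h1, h2⟩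
      simp only [min_def, max_def] at h1 h2
      constructor <;> split_ifs at h1 h2 <;> simp_all <;> linarith
    have hmeas : StronglyMeasurableAtFilter u (nhds t) MeasureTheory.volume :=
      (hucont.stronglyMeasurableAtFilter isOpen_Ioo _ (hIoo ht))
    have hcont : ContinuousAt u t := hucontAt t (hIoo ht)
    have := (intervalIntegral.integral_hasDerivAt_right hint hmeas hcont).const_mul (b * A * z)
    exact this
  -- the function F and its derivative
  set F : ℝ → ℂ := fun t => g ((t:ℂ) * z) * Complex.exp (-E t) with hF
  have hFderiv : ∀ t ∈ Icc (0:ℝ) 1, 0 < t → HasDerivAt F 0 t := by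
    intro t ht ht0
    have htz : (t:ℂ) * z ∈ ball (0:ℂ) 1 := hsz t (by rw [abs_of_pos ht0]; exact ht.2)
    have htz0 : (t:ℂ) * z ≠ 0 := mul_ne_zero (by exact_mod_cast ht0.ne') hz0
    have hg' := hgderiv _ htz htz0
    have hc : HasDerivAt (fun s : ℝ => (s:ℂ) * z) z t := by
      simpa using (Complex.ofRealCLM.hasDerivAt (x := t)).mul_const z
    have h1 : HasDerivAt (fun s : ℝ => g ((s:ℂ) * z))
        ((b * A * ψ ((t:ℂ)*z) * g ((t:ℂ)*z)) * z) t := by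
      have := HasFDerivAt.comp_hasDerivAt t (hg'.hasFDerivAt.restrictScalars ℝ) hc
      exact hg'.comp t hc
    have h2 : HasDerivAt (fun s : ℝ => Complex.exp (-E s))
        (Complex.exp (-E t) * (-(b * A * z * u t))) t := by
      exact ((hEderiv t ht).neg).cexp
    have := h1.mul h2
    refine this.congr_deriv ?_
    have hut : u t = ψ ((t:ℂ) * z) := rfl
    rw [hut]
    ring
  -- F is constant on (0,1]
  have hFconst : ∀ ε : ℝ, 0 < ε → ε ≤ 1 → F 1 = F ε := by
    intro ε hε hε1
    have hcont : ContinuousOn F (Icc ε 1) := by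
      intro t ht
      exact ((hFderiv t ⟨le_trans hε.le ht.1, ht.2⟩ (lt_of_lt_of_le hε ht.1)).continuousAt).continuousWithinAt
    have hderiv : ∀ x ∈ Ico ε 1, HasDerivWithinAt F 0 (Ici x) x := by
      intro x hx
      exact (hFderiv x ⟨le_trans hε.le hx.1, hx.2.le⟩ (lt_of_lt_of_le hε hx.1)).hasDerivWithinAt
    exact constant_of_has_deriv_right_zero hcont hderiv 1 ⟨hε1, le_rfl⟩
  -- F is continuous at 0; F 0 = 1
  have hFc : ContinuousAt F 0 := by
    have hg0' : ContinuousAt (fun s : ℝ => g ((s:ℂ) * z)) 0 := by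
      have h0 : ((0:ℝ):ℂ) * z ∈ ball (0:ℂ) 1 := by
        simp only [Complex.ofReal_zero, zero_mul]
        exact mem_ball_self one_pos
      exact ContinuousAt.comp ((hgd.differentiableAt
        (isOpen_ball.mem_nhds h0)).continuousAt)
        ((Complex.continuous_ofReal.mul continuous_const).continuousAt)
    have hE0 : ContinuousAt E 0 := (hEderiv 0 ⟨le_rfl, zero_le_one⟩).continuousAt
    exact hg0'.mul (Complex.continuous_exp.continuousAt.comp hE0.neg)
  have hF0 : F 0 = 1 := by
    simp [hF, hE, hg0]
  -- conclude F 1 = 1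
  have hF1 : F 1 = 1 := by
    have ht1 : Filter.Tendsto F (nhdsWithin 0 (Ioi 0)) (nhds 1) := by
      rw [← hF0]
      exact hFc.continuousWithinAt.tendsto
    have ht2 : Filter.Tendsto F (nhdsWithin 0 (Ioi 0)) (nhds (F 1)) := by
      apply Filter.Tendsto.congr' _ tendsto_const_nhds
      filter_upwards [Ioo_mem_nhdsGT_of_mem (Set.mem_Ico.mpr ⟨le_rfl, one_pos⟩)] with t htm
      exact hFconst t htm.1 htm.2.le
    exact tendsto_nhds_unique ht2 ht1
  -- hence g z = exp (E 1)
  have hgz : g z = Complex.exp (E 1) := by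
    have : g ((1:ℝ) * z) * Complex.exp (-E 1) = 1 := hF1
    rw [Complex.exp_neg] at this
    field_simp at this
    simpa using this
  have hfz : f z = z * g z := by
    rw [hgval z hz0]; field_simp
  -- bound on E 1
  have hEbound : ‖E 1‖ ≤ ‖b‖ * A * r := by
    have hInorm : ‖∫ s in (0:ℝ)..1, u s‖ ≤ 1 := by
      have := intervalIntegral.norm_integral_le_of_norm_le_const (C := 1)
        (f := u) (a := 0) (b := 1) ?_
      · simpa using this
      · intro x hx
        rw [uIoc_of_le zero_le_one] at hx
        exact hψle _ (hsz x (by rw [abs_of_pos hx.1]; exact hx.2))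
    have : ‖E 1‖ = ‖b‖ * A * r * ‖∫ s in (0:ℝ)..1, u s‖ := by
      simp only [hE, norm_mul, Complex.norm_real, Real.norm_eq_abs, abs_of_pos hA0, hr]
    rw [this]
    nlinarith [norm_nonneg (∫ s in (0:ℝ)..1, u s), norm_nonneg b, mul_nonneg (mul_nonneg (norm_nonneg b) hA0.le) hr0.le]
  have hre : |(E 1).re| ≤ ‖b‖ * A * r := (Complex.abs_re_le_norm (E 1)).trans hEbound
  rw [abs_le] at hre
  have habsf : ‖f z‖ = r * Real.exp ((E 1).re) := by
    rw [hfz, norm_mul, hgz, Complex.norm_exp, hr]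
  rw [habsf]
  constructor
  · apply mul_le_mul_of_nonneg_left _ hr0.le
    exact Real.exp_le_exp.mpr (by linarith [hre.1])
  · apply mul_le_mul_of_nonneg_left _ hr0.le
    exact Real.exp_le_exp.mpr hre.2
end

section
/- Suppose B ≠ 0. The function f*(z) = z·exp( (b·(A − B)/B)·Log(1 + B·z) ), where Log denotes the principal branch of the complex logarithm (well defined since Re(1 + B·z) > 0 for z ∈ D), belongs to the class S*(A,B,b); indeed it satisfies 1 + (1/b)·(z·f*′(z)/f*(z) − 1) = (1 + A·z)/(1 + B·z) for all z ∈ D \ {0}. (The extremal function of Theorems 2.1 and 3.1, case B ≠ 0.) -/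
open Complex Metric Set

noncomputable def fstar (A B : ℝ) (b : ℂ) : ℂ → ℂ :=
  fun z => z * Complex.exp ((b * ((A:ℂ) - (B:ℂ)) / (B:ℂ)) * Complex.log (1 + (B:ℂ) * z))

theorem stmt6 (A B : ℝ) (hB : -1 ≤ B) (hBA : B < A) (hA : A ≤ 1)
    (b : ℂ) (hb : b ≠ 0) (hB0 : B ≠ 0) :
    AnalyticOn ℂ (fstar A B b) (ball 0 1) ∧
    fstar A B b 0 = 0 ∧
    deriv (fstar A B b) 0 = 1 ∧
    (∀ z ∈ ball (0:ℂ) 1, z ≠ 0 → fstar A B b z ≠ 0) ∧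
    (∀ z ∈ ball (0:ℂ) 1, z ≠ 0 →
      1 + (1/b) * (z * deriv (fstar A B b) z / fstar A B b z - 1)
        = (1 + (A:ℂ) * z) / (1 + (B:ℂ) * z)) := by
  have hslit : ∀ z ∈ ball (0:ℂ) 1, (1 + (B:ℂ) * z) ∈ Complex.slitPlane := by
    intro z hz
    simp only [mem_ball, dist_zero_right] at hz
    have hBz : ‖(B:ℂ) * z‖ < 1 := by
      rw [norm_mul, Complex.norm_real, Real.norm_eq_abs]
      calc |B| * ‖z‖ ≤ 1 * ‖z‖ := by
            apply mul_le_mul_of_nonneg_right _ (norm_nonneg z)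
            rw [abs_le]; constructor <;> nlinarith
        _ = ‖z‖ := one_mul _
        _ < 1 := hz
    apply Complex.mem_slitPlane_iff.mpr
    left
    have h2 : |((B:ℂ)*z).re| < 1 := lt_of_le_of_lt (Complex.abs_re_le_norm _) hBz
    simp only [Complex.add_re, Complex.one_re]
    rw [abs_lt] at h2; linarith
  have hderiv : ∀ z ∈ ball (0:ℂ) 1, HasDerivAt (fstar A B b)
      (Complex.exp (b * ((A:ℂ) - B) / B * Complex.log (1 + (B:ℂ) * z)) +
        z * (Complex.exp (b * ((A:ℂ) - B) / B * Complex.log (1 + (B:ℂ) * z)) *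
          (b * ((A:ℂ) - B) / B * ((1 + (B:ℂ) * z)⁻¹ * B)))) z := by
    intro z hz
    have h1 : HasDerivAt (fun w : ℂ => 1 + (B:ℂ) * w) B z := by
      simpa using ((hasDerivAt_id z).const_mul (B:ℂ)).const_add 1
    have h2 : HasDerivAt (fun w : ℂ => Complex.log (1 + (B:ℂ) * w)) ((1 + (B:ℂ) * z)⁻¹ * B) z :=
      HasDerivAt.comp (h₂ := Complex.log) (x := z) (Complex.hasDerivAt_log (hslit z hz)) h1
    have h4 := (hasDerivAt_id z).mul ((h2.const_mul (b * ((A:ℂ) - B) / B)).cexp)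
    rw [one_mul] at h4
    exact h4
  have hE : ∀ z : ℂ, Complex.exp (b * ((A:ℂ) - B) / B * Complex.log (1 + (B:ℂ) * z)) ≠ 0 :=
    fun z => Complex.exp_ne_zero _
  have hmem0 : (0:ℂ) ∈ ball (0:ℂ) 1 := by simp
  refine ⟨?_, ?_, ?_, ?_, ?_⟩
  · exact (DifferentiableOn.analyticOnNhd
      (fun z hz => ((hderiv z hz).differentiableAt).differentiableWithinAt) isOpen_ball).analyticOn
  · simp [fstar]
  · rw [(hderiv 0 hmem0).deriv]; simp
  · intro z hz hz0
    exact mul_ne_zero hz0 (hE z)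
  · intro z hz hz0
    have hw : (1 + (B:ℂ) * z) ≠ 0 := Complex.slitPlane_ne_zero (hslit z hz)
    have hB0' : (B:ℂ) ≠ 0 := by exact_mod_cast hB0
    rw [(hderiv z hz).deriv]
    simp only [fstar]
    generalize hEq : Complex.exp (b * ((A:ℂ) - B) / B * Complex.log (1 + (B:ℂ) * z)) = E
    have hEne : E ≠ 0 := hEq ▸ Complex.exp_ne_zero _
    have hw' : 1 + z * (B:ℂ) ≠ 0 := by rwa [mul_comm]
    field_simp
    ring
end

section
/- If f belongs to S*(1,−1,b) (the class of starlike functions of complex order b), then Re( z·f′(z)/f(z) ) > 0 for every z ∈ D \ {0} with |z| < 1/( |b| + √( |b|² − 2·Re b + 1 ) ). (Theorem 2.1, special case A = 1, B = −1; the radius of starlikeness of starlike functions of complex order, due to Nasr and Aouf.) -/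
open Complex Metric Set

set_option maxHeartbeats 800000 in
theorem stmt10 
    (b : ℂ) (hb : b ≠ 0) (f : ℂ → ℂ)
    (hf : AnalyticOn ℂ f (ball 0 1))
    (hf0 : f 0 = 0) (hf'0 : deriv f 0 = 1)
    (hfne : ∀ z ∈ ball (0:ℂ) 1, z ≠ 0 → f z ≠ 0)
    (ω : ℂ → ℂ) (hω : AnalyticOn ℂ ω (ball 0 1))
    (hω0 : ω 0 = 0) (hωlt : ∀ z ∈ ball (0:ℂ) 1, ‖ω z‖ < 1)
    (hmem : ∀ z ∈ ball (0:ℂ) 1, z ≠ 0 →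
      1 + (1/b) * (z * deriv f z / f z - 1) = (1 + ω z) / (1 - ω z))
    (z : ℂ) (hz : z ∈ ball (0:ℂ) 1) (hz0 : z ≠ 0)
    (hzr : ‖z‖ <
      1 / (‖b‖ + Real.sqrt (‖b‖^2 - 2 * b.re + 1))) :
    0 < (z * deriv f z / f z).re := by
  set s := Real.sqrt (‖b‖^2 - 2 * b.re + 1) with hs_def
  set w : ℂ := ω z with hw_def
  -- Schwarz lemma : |w| ≤ |z|
  have hmaps : MapsTo ω (ball 0 1) (ball 0 1) := fun x hx => by
    simpa [mem_ball, dist_zero_right] using hωlt x hx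
  have hschwarz : ‖w‖ ≤ ‖z‖ :=
    Complex.norm_le_norm_of_mapsTo_ball (hω.differentiableOn) (hmaps.mono_right ball_subset_closedBall) hω0
      (by simpa [mem_ball, dist_zero_right] using hz)
  have hw1 : ‖w‖ < 1 := hωlt z hz
  have hwne : (1 : ℂ) - w ≠ 0 := by
    intro h
    have : w = 1 := by linear_combination -h
    simp [this] at hw1
  have hfz : f z ≠ 0 := hfne z hz hz0
  -- solve for z f'/f
  have hZ : z * deriv f z / f z = 1 + 2 * b * w / (1 - w) := by
    have h := hmem z hz hz0
    rw [← hw_def] at h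
    field_simp [hfz, hwne] at h ⊢
    linear_combination h
  rw [hZ]
  -- real-part computation
  have hns : (0:ℝ) < Complex.normSq (1 - w) := by
    simpa [Complex.normSq_pos] using hwne
  set br := b.re; set bi := b.im; set wr := w.re; set wi := w.im
  have hconjne : (starRingEnd ℂ) (1 - w) ≠ 0 := by
    intro h
    exact hwne (by simpa using congrArg (starRingEnd ℂ) h)
  have hdiv : 2 * b * w / (1 - w)
      = (2 * b * w * (starRingEnd ℂ) (1 - w)) / ((Complex.normSq (1 - w) : ℝ) : ℂ) := by
    rw [← Complex.mul_conj]
    exact (mul_div_mul_right _ _ hconjne).symm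
  have hnum : (2 * b * w * (starRingEnd ℂ) (1 - w)).re
      = 2 * (br * wr - bi * wi) - 2 * br * (wr ^ 2 + wi ^ 2) := by
    simp only [Complex.mul_re, Complex.mul_im, Complex.sub_re, Complex.sub_im,
      Complex.conj_re, Complex.conj_im, Complex.one_re, Complex.one_im]
    norm_num
    ring
  have hns2 : Complex.normSq (1 - w) = (1 - wr) ^ 2 + wi ^ 2 := by
    simp [Complex.normSq_apply, Complex.sub_re, Complex.sub_im]
    ring
  rw [Complex.add_re, Complex.one_re, hdiv, Complex.div_ofReal_re, hnum]
  set num := 2 * (br * wr - bi * wi) - 2 * br * (wr ^ 2 + wi ^ 2) with hnum_def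
  rw [show (1:ℝ) + num / Complex.normSq (1 - w)
      = (Complex.normSq (1 - w) + num) / Complex.normSq (1 - w) by field_simp]
  apply div_pos _ hns
  -- key inequalities
  have hs0 : 0 ≤ s := Real.sqrt_nonneg _
  have hs2 : s ^ 2 = ‖b‖ ^ 2 - 2 * br + 1 := by
    rw [hs_def]
    apply Real.sq_sqrt
    have : ‖b‖ ^ 2 = br ^ 2 + bi ^ 2 := by
      rw [Complex.sq_norm, Complex.normSq_apply]; ring
    nlinarith [sq_nonneg (br - 1), sq_nonneg bi]
  have hb2 : ‖b‖ ^ 2 = br ^ 2 + bi ^ 2 := by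
    rw [Complex.sq_norm, Complex.normSq_apply]; ring
  have hbpos : 0 < ‖b‖ := by simpa using hb
  have hbs : 0 < ‖b‖ + s := by linarith
  have hr1 : ‖z‖ * (‖b‖ + s) < 1 := by
    rw [lt_div_iff₀ hbs] at hzr; exact hzr
  set t := ‖w‖ with ht_def
  have ht0 : 0 ≤ t := norm_nonneg w
  have ht2 : t ^ 2 = wr ^ 2 + wi ^ 2 := by
    rw [ht_def, Complex.sq_norm, Complex.normSq_apply]; ring
  have hrt : t * (‖b‖ + s) < 1 :=
    lt_of_le_of_lt (by nlinarith) hr1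
  -- Cauchy-Schwarz: ((br-1)wr - bi wi)^2 ≤ s^2 t^2
  have hCS : ((br - 1) * wr - bi * wi) ^ 2 ≤ s ^ 2 * t ^ 2 := by
    rw [hs2, hb2, ht2]
    nlinarith [sq_nonneg ((br - 1) * wi + bi * wr)]
  have hX : -(s * t) ≤ (br - 1) * wr - bi * wi := by
    nlinarith [mul_nonneg hs0 ht0, sq_nonneg ((br - 1) * wr - bi * wi + s * t)]
  have hpos1 : 0 < 1 - t * (‖b‖ + s) := by linarith
  have hpos2 : 0 < 1 - s * t + ‖b‖ * t := by nlinarith [mul_nonneg (norm_nonneg b) ht0]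
  have hprod : 0 < (1 - t * (‖b‖ + s)) * (1 - s * t + ‖b‖ * t) :=
    mul_pos hpos1 hpos2
  rw [hns2, hnum_def]
  nlinarith [hprod, hX, hs2, ht2]
end

section
/- Let 0 < β < 1. If f belongs to S*(β,−β,b), then Re( z·f′(z)/f(z) ) > 0 for every z ∈ D \ {0} with |z| < 1/( β·( |b| + √( |b|² − 2·Re b + 1 ) ) ). (Theorem 2.1, special case A = β, B = −β.) -/
open Complex Metric Set

theorem stmt11 (β : ℝ) (hβ0 : 0 < β) (hβ1 : β < 1)
    (b : ℂ) (hb : b ≠ 0) (f : ℂ → ℂ)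
    (hf : AnalyticOn ℂ f (ball 0 1))
    (hf0 : f 0 = 0) (hf'0 : deriv f 0 = 1)
    (hfne : ∀ z ∈ ball (0:ℂ) 1, z ≠ 0 → f z ≠ 0)
    (ω : ℂ → ℂ) (hω : AnalyticOn ℂ ω (ball 0 1))
    (hω0 : ω 0 = 0) (hωlt : ∀ z ∈ ball (0:ℂ) 1, ‖ω z‖ < 1)
    (hmem : ∀ z ∈ ball (0:ℂ) 1, z ≠ 0 →
      1 + (1/b) * (z * deriv f z / f z - 1) = (1 + (β:ℂ) * ω z) / (1 - (β:ℂ) * ω z))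
    (z : ℂ) (hz : z ∈ ball (0:ℂ) 1) (hz0 : z ≠ 0)
    (hzr : ‖z‖ <
      1 / (β * (‖b‖ + Real.sqrt ((‖b‖)^2 - 2 * b.re + 1)))) :
    0 < (z * deriv f z / f z).re := by
  set c : ℝ := ‖b‖ with hc
  set d : ℝ := ‖b - 1‖ with hd
  have hc0 : 0 < c := by rw [hc]; exact norm_pos_iff.mpr hb
  have hd0 : 0 ≤ d := norm_nonneg _
  -- the sqrt equals d
  have hd2 : d ^ 2 = c ^ 2 - 2 * b.re + 1 := by
    simp only [hc, hd, Complex.sq_norm, Complex.normSq_apply, Complex.sub_re,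
      Complex.sub_im, Complex.one_re, Complex.one_im]
    ring
  have hsqrt : Real.sqrt ((‖b‖)^2 - 2 * b.re + 1) = d := by
    rw [← hc, ← hd2]; exact Real.sqrt_sq hd0
  rw [hsqrt] at hzr
  -- Schwarz lemma
  have hschwarz : ‖ω z‖ ≤ ‖z‖ := by
    apply Complex.norm_le_norm_of_mapsTo_ball (hω.differentiableOn)
      (fun x hx => mem_closedBall_zero_iff.2 (hωlt x hx).le) hω0
    exact mem_ball_zero_iff.1 hz
  set W : ℂ := (β:ℂ) * ω z with hW
  set s : ℝ := ‖W‖ with hs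
  have hs0 : 0 ≤ s := norm_nonneg _
  have hsβ : s = β * ‖ω z‖ := by
    rw [hs, hW, norm_mul, Complex.norm_real, Real.norm_eq_abs, abs_of_pos hβ0]
  -- s * (c + d) < 1
  have hcd0 : 0 < β * (c + d) := by positivity
  have hz1 : ‖z‖ * (β * (c + d)) < 1 := by
    rw [← lt_div_iff₀ hcd0]; exact hzr
  have hscd : s * (c + d) < 1 := by
    have h1 : s ≤ β * ‖z‖ := by
      rw [hsβ]; exact mul_le_mul_of_nonneg_left hschwarz hβ0.le
    calc s * (c + d) ≤ (β * ‖z‖) * (c + d) := by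
          apply mul_le_mul_of_nonneg_right h1; positivity
      _ = ‖z‖ * (β * (c + d)) := by ring
      _ < 1 := hz1
  have hs1 : s < 1 := by
    have : ‖ω z‖ < 1 := hωlt z hz
    rw [hsβ]; nlinarith
  have hD : (1 : ℂ) - W ≠ 0 := by
    refine sub_ne_zero.mpr fun h => absurd hs1 ?_
    simp [hs, ← h]
  have hfz : f z ≠ 0 := hfne z hz hz0
  have hmemz := hmem z hz hz0
  have hX : z * deriv f z / f z = (1 + (2*b - 1) * W) / (1 - W) := by
    rw [hW] at hD
    field_simp at hmemz
    rw [hW, div_eq_div_iff hfz hD]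
    linear_combination hmemz
  rw [hX, Complex.div_re]
  have hns : 0 < Complex.normSq (1 - W) := Complex.normSq_pos.mpr (by rwa [hW] at hD ⊢)
  rw [← add_div, lt_div_iff₀ hns, zero_mul]
  have habs2 : ‖2*b - 2‖ = 2 * d := by
    rw [show (2*b - 2 : ℂ) = 2*(b-1) by ring, norm_mul, hd]
    simp
  have hre : -(2*d*s) ≤ ((2*b-2)*W).re := by
    have h1 := Complex.abs_re_le_norm ((2*b-2)*W)
    rw [norm_mul, habs2, ← hs] at h1
    have := neg_abs_le ((2*b-2)*W).re
    nlinarith [abs_nonneg ((2*b-2)*W).re]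
  have hsq : s^2 = W.re^2 + W.im^2 := by
    rw [hs, Complex.sq_norm, Complex.normSq_apply]; ring
  have hT : (1+(2*b-1)*W).re * (1-W).re + (1+(2*b-1)*W).im * (1-W).im
      = 1 + ((2*b-2)*W).re - (2*b.re - 1)*(W.re^2 + W.im^2) := by
    simp only [Complex.mul_re, Complex.mul_im, Complex.add_re, Complex.add_im,
      Complex.sub_re, Complex.sub_im, Complex.one_re, Complex.one_im,
      Complex.re_ofNat, Complex.im_ofNat]
    ring
  rw [hT, ← hsq]
  have h2 : (0:ℝ) < 1 - s*(c+d) := by nlinarith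
  have h3 : (0:ℝ) < 1 + (c-d)*s := by nlinarith
  have h4 : (2*b.re - 1) * s^2 = (c^2 - d^2) * s^2 := by
    rw [show c^2 - d^2 = 2*b.re - 1 by linarith]
  have hP : (0:ℝ) < 1 - 2*d*s - (c^2 - d^2)*s^2 := by
    calc (0:ℝ) < (1 - s*(c+d)) * (1 + (c-d)*s) := mul_pos h2 h3
      _ = 1 - 2*d*s - (c^2 - d^2)*s^2 := by ring
  linarith [hP, hre, h4]
end

section
/- Let 0 ≤ β < 1 and assume (1 − β)²·|b|² + 1 − 2·(1 − β)·Re b ≥ 0. If f belongs to S*(1 − 2β, −1, b), then Re( z·f′(z)/f(z) ) > 0 for every z ∈ D \ {0} with |z| < 1/( (1 − β)·|b| + √( (1 − β)²·|b|² + 1 − 2·(1 − β)·Re b ) ). (Theorem 2.1, special case A = 1 − 2β, B = −1, with the specialization of the general radius formula carried out correctly.) -/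
open Complex Metric Set

theorem stmt12 (β : ℝ) (hβ0 : 0 ≤ β) (hβ1 : β < 1)
    (b : ℂ) (hb : b ≠ 0) (f : ℂ → ℂ)
    (hf : AnalyticOn ℂ f (ball 0 1))
    (hf0 : f 0 = 0) (hf'0 : deriv f 0 = 1)
    (hfne : ∀ z ∈ ball (0:ℂ) 1, z ≠ 0 → f z ≠ 0)
    (ω : ℂ → ℂ) (hω : AnalyticOn ℂ ω (ball 0 1))
    (hω0 : ω 0 = 0) (hωlt : ∀ z ∈ ball (0:ℂ) 1, ‖ω z‖ < 1)
    (hmem : ∀ z ∈ ball (0:ℂ) 1, z ≠ 0 →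
      1 + (1/b) * (z * deriv f z / f z - 1) = (1 + ((1:ℂ) - 2*(β:ℂ)) * ω z) / (1 - ω z))
    (hdisc : 0 ≤ (1 - β)^2 * ‖b‖^2 + 1 - 2 * (1 - β) * b.re)
    (z : ℂ) (hz : z ∈ ball (0:ℂ) 1) (hz0 : z ≠ 0)
    (hzr : ‖z‖ <
      1 / ((1 - β) * ‖b‖ +
        Real.sqrt ((1 - β)^2 * ‖b‖^2 + 1 - 2 * (1 - β) * b.re))) :
    0 < (z * deriv f z / f z).re := by
  -- Schwarz lemma
  have hωdiff : DifferentiableOn ℂ ω (ball 0 1) := hω.differentiableOn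
  have hmaps : MapsTo ω (ball (0:ℂ) 1) (ball (0:ℂ) 1) := fun x hx =>
    mem_ball_zero_iff.2 (hωlt x hx)
  have hz1 : ‖z‖ < 1 := mem_ball_zero_iff.1 hz
  have hschwarz : ‖ω z‖ ≤ ‖z‖ :=
    Complex.norm_le_norm_of_mapsTo_ball hωdiff (hmaps.mono_right ball_subset_closedBall) hω0 hz1
  set w := ω z with hwdef
  have hw1 : ‖w‖ < 1 := hωlt z hz
  have h1w : (1:ℂ) - w ≠ 0 := by
    intro h
    have : (1:ℂ) = w := by linear_combination h
    rw [← this] at hw1; simp at hw1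
  have hfz : f z ≠ 0 := hfne z hz hz0
  have key := hmem z hz hz0
  set X := z * deriv f z / f z with hXdef
  -- derive X * (1 - w) = (1 - w) + 2(1-β) b w
  have h2 : X * (1 - w) = (1 - w) + 2*(1-(β:ℂ))*b*w := by
    have key' : (1 + (1/b) * (X - 1)) * (1 - w) = 1 + ((1:ℂ) - 2*(β:ℂ)) * w := by
      rw [key, ← hwdef]; field_simp
    field_simp at key'
    linear_combination key'
  set β' : ℝ := 1 - β with hβ'def
  have hβ'pos : 0 < β' := by simp [hβ'def]; linarith
  set c0 : ℂ := 1 - (β':ℂ)*b with hc0def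
  -- D = normSq c0
  have habsb : (‖b‖)^2 = b.re^2 + b.im^2 := by
    rw [Complex.sq_norm, Complex.normSq_apply]; ring
  have hD : (1 - β)^2 * (‖b‖)^2 + 1 - 2 * (1 - β) * b.re
      = (‖c0‖)^2 := by
    rw [habsb, Complex.sq_norm, Complex.normSq_apply, hc0def]
    simp [Complex.sub_re, Complex.sub_im, Complex.mul_re, Complex.mul_im]
    ring
  have hsqrtD : Real.sqrt ((1 - β)^2 * (‖b‖)^2 + 1 - 2 * (1 - β) * b.re)
      = ‖c0‖ := by
    rw [hD, Real.sqrt_sq (norm_nonneg _)]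
  rw [hsqrtD] at hzr
  -- radius condition
  have hcpos : 0 < β' * ‖b‖ + ‖c0‖ := by
    have : 0 < ‖b‖ := norm_pos_iff.2 hb
    positivity
  have hr1 : ‖z‖ * (β' * ‖b‖ + ‖c0‖) < 1 := by
    rw [lt_div_iff₀ hcpos] at hzr
    linarith [hzr]
  -- key positivity: |1 - c0 w| > β' |b| |w|
  have habsw : ‖w‖ ≤ ‖z‖ := hschwarz
  have hstep : β' * ‖b‖ * ‖w‖ < ‖1 - c0*w‖ := by
    have h1 : ‖1 - c0*w‖ ≥ 1 - ‖c0‖ * ‖w‖ := by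
      have := norm_sub_norm_le (1:ℂ) (c0*w)
      simp [norm_mul] at this ⊢
      linarith [this]
    have h2' : ‖c0‖ * ‖w‖ ≤ ‖c0‖ * ‖z‖ :=
      mul_le_mul_of_nonneg_left habsw (norm_nonneg _)
    have h3' : β' * ‖b‖ * ‖w‖ ≤ β' * ‖b‖ * ‖z‖ := by
      apply mul_le_mul_of_nonneg_left habsw
      positivity
    nlinarith [hr1, norm_nonneg w, norm_nonneg z]
  -- E > 0
  have hE : 0 < Complex.normSq (1 - c0*w) - β'^2 * Complex.normSq b * Complex.normSq w := by
    have e1 : Complex.normSq (1 - c0*w) = (‖1 - c0*w‖)^2 := (Complex.sq_norm _).symm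
    have e2 : β'^2 * Complex.normSq b * Complex.normSq w
        = (β' * ‖b‖ * ‖w‖)^2 := by
      rw [← Complex.sq_norm, ← Complex.sq_norm]; ring
    rw [e1, e2]
    have hnn : 0 ≤ β' * ‖b‖ * ‖w‖ := by positivity
    nlinarith [hstep]
  -- X.re * normSq (1-w) = E
  have hXre : X.re * Complex.normSq (1 - w)
      = Complex.normSq (1 - c0*w) - β'^2 * Complex.normSq b * Complex.normSq w := by
    have hre : X.re * Complex.normSq (1 - w) = (X * ((1-w) * (starRingEnd ℂ) (1-w))).re := by
      rw [Complex.mul_conj]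
      simp [Complex.mul_re]
    rw [hre]
    have : X * ((1-w) * (starRingEnd ℂ) (1-w)) = (X * (1-w)) * (starRingEnd ℂ) (1-w) := by ring
    rw [this, h2]
    simp only [Complex.normSq_apply, Complex.mul_re, Complex.mul_im, Complex.add_re,
      Complex.add_im, Complex.sub_re, Complex.sub_im, Complex.one_re, Complex.one_im,
      Complex.conj_re, Complex.conj_im, Complex.ofReal_re, Complex.ofReal_im, hc0def,
      Complex.re_ofNat, Complex.im_ofNat]
    push_cast
    ring
  have hns : 0 < Complex.normSq (1 - w) := Complex.normSq_pos.2 h1w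
  have : 0 < X.re * Complex.normSq (1 - w) := by rw [hXre]; exact hE
  nlinarith [this, hns]
end

section
/- If f belongs to S*(1,0,b), then Re( z·f′(z)/f(z) ) > 0 for every z ∈ D \ {0} with |z| < 1/|b|. (Theorem 2.1, special case A = 1, B = 0.) -/
open Complex Metric Set

theorem stmt13 
    (b : ℂ) (hb : b ≠ 0) (f : ℂ → ℂ)
    (hf : AnalyticOn ℂ f (ball 0 1))
    (hf0 : f 0 = 0) (hf'0 : deriv f 0 = 1)
    (hfne : ∀ z ∈ ball (0:ℂ) 1, z ≠ 0 → f z ≠ 0)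
    (ω : ℂ → ℂ) (hω : AnalyticOn ℂ ω (ball 0 1))
    (hω0 : ω 0 = 0) (hωlt : ∀ z ∈ ball (0:ℂ) 1, ‖ω z‖ < 1)
    (hmem : ∀ z ∈ ball (0:ℂ) 1, z ≠ 0 →
      1 + (1/b) * (z * deriv f z / f z - 1) = 1 + ω z)
    (z : ℂ) (hz : z ∈ ball (0:ℂ) 1) (hz0 : z ≠ 0)
    (hzr : ‖z‖ < 1 / ‖b‖) :
    0 < (z * deriv f z / f z).re := by
  -- Schwarz lemma: |ω z| ≤ |z|
  have hschwarz : ‖ω z‖ ≤ ‖z‖ := by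
    have := Complex.norm_le_norm_of_mapsTo_ball
      (hω.differentiableOn) ?_ hω0 (mem_ball_zero_iff.mp hz)
    · simpa using this
    intro w hw
    simpa [Metric.mem_ball, Complex.dist_eq] using (hωlt w hw).le
  -- from hmem: z f'/f = 1 + b * ω z
  have hkey : z * deriv f z / f z = 1 + b * ω z := by
    have h := hmem z hz hz0
    have h' : (1/b) * (z * deriv f z / f z - 1) = ω z := by
      field_simp at h ⊢; linear_combination h
    field_simp at h'
    linear_combination h'
  rw [hkey]
  have hbz : ‖b * ω z‖ < 1 := by
    rw [norm_mul]
    calc ‖b‖ * ‖ω z‖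
        ≤ ‖b‖ * ‖z‖ := by
          exact mul_le_mul_of_nonneg_left hschwarz (norm_nonneg _)
      _ < 1 := by
          have hb' : 0 < ‖b‖ := norm_pos_iff.mpr hb
          rw [lt_div_iff₀ hb'] at hzr
          linarith [hzr]
  have h2 := Complex.abs_re_le_norm (b * ω z)
  have h3 := neg_abs_le (b * ω z).re
  simp only [Complex.add_re, Complex.one_re]
  linarith
end
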